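/- Let T(x) = ReLU(Ax + b) with A invertible. For J ⊆ I = {1,...,d}, the preimage of the canonical sector Ŝ_{(J,∅)} under T is the union over all K ⊆ I\J of the sectors S_{(J,K)}: T^{-1}(Ŝ_{(J,∅)}) = ⋃_{K ⊆ I\J} S_{(J,K)}. -/

import Mathlib

open Matrix Finset

noncomputable def relu {d : ℕ} (y : Fin d → ℝ) : Fin d → ℝ := fun i => max (y i) 0

def sector {d : ℕ} (x₀ : Fin d → ℝ) (astar : Fin d → Fin d → ℝ)
    (Ip Im : Finset (Fin d)) : Set (Fin d → ℝ) :=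
  { x | ∃ α : Fin d → ℝ,
      (∀ i ∈ Ip ∪ Im, 0 < α i) ∧
      x = x₀ + ∑ i ∈ Ip, α i • astar i - ∑ i ∈ Im, α i • astar i }

def canonicalSector {d : ℕ} (J : Finset (Fin d)) : Set (Fin d → ℝ) :=
  { y | ∃ β : Fin d → ℝ, (∀ i ∈ J, 0 < β i) ∧
      y = ∑ i ∈ J, β i • (Pi.single i (1:ℝ) : Fin d → ℝ) }

theorem stmt11 {d : ℕ} (A : Matrix (Fin d) (Fin d) ℝ) (hA : IsUnit A.det)
    (b : Fin d → ℝ) (x₀ : Fin d → ℝ) (hx₀ : x₀ = -(A⁻¹.mulVec b))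
    (astar : Fin d → Fin d → ℝ)
    (hdual : ∀ i j, A j ⬝ᵥ astar i = if i = j then 1 else 0)
    (J : Finset (Fin d)) :
    (fun x => relu (A.mulVec x + b)) ⁻¹' canonicalSector J
      = ⋃ (K : Finset (Fin d)) (_ : K ⊆ Jᶜ), sector x₀ astar J K := by
  classical
  have hAinv : A⁻¹ * A = 1 := Matrix.nonsing_inv_mul A hA
  have hAinv' : A * A⁻¹ = 1 := Matrix.mul_nonsing_inv A hA
  have hx0 : A.mulVec x₀ + b = 0 := by
    rw [hx₀]
    simp [Matrix.mulVec_neg, Matrix.mulVec_mulVec, hAinv', Matrix.one_mulVec]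
  have hAstar : ∀ i, A.mulVec (astar i) = Pi.single i 1 := by
    intro i; funext j
    show A j ⬝ᵥ astar i = _
    rw [hdual i j, Pi.single_apply]
    simp [eq_comm]
  have hsum : ∀ (S : Finset (Fin d)) (α : Fin d → ℝ) (j : Fin d),
      (A.mulVec (∑ i ∈ S, α i • astar i)) j = if j ∈ S then α j else 0 := by
    intro S α j
    have : A.mulVec (∑ i ∈ S, α i • astar i) = ∑ i ∈ S, α i • A.mulVec (astar i) := by
      rw [← Matrix.mulVecLin_apply, map_sum]
      simp [Matrix.mulVecLin_apply]
    rw [this]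
    simp [Finset.sum_apply, hAstar, Pi.single_apply, Finset.sum_ite_eq' S j]
  have key : ∀ (K : Finset (Fin d)) (α : Fin d → ℝ) (j : Fin d),
      (A.mulVec (x₀ + ∑ i ∈ J, α i • astar i - ∑ i ∈ K, α i • astar i) + b) j
        = (if j ∈ J then α j else 0) - (if j ∈ K then α j else 0) := by
    intro K α j
    have : A.mulVec (x₀ + ∑ i ∈ J, α i • astar i - ∑ i ∈ K, α i • astar i) + b
        = (A.mulVec x₀ + b) + (A.mulVec (∑ i ∈ J, α i • astar i)
            - A.mulVec (∑ i ∈ K, α i • astar i)) := by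
      rw [Matrix.mulVec_sub, Matrix.mulVec_add]; ring
    rw [this, hx0]
    simp [hsum]
  have hinj : Function.Injective A.mulVec := by
    intro u v h
    have := congrArg (A⁻¹.mulVec) h
    simpa [Matrix.mulVec_mulVec, hAinv, Matrix.one_mulVec] using this
  ext x
  set y := A.mulVec x + b with hy
  simp only [Set.mem_preimage, Set.mem_iUnion]
  constructor
  · rintro ⟨β, hβ, hrelu⟩
    have hval : ∀ j, max (y j) 0 = if j ∈ J then β j else 0 := by
      intro j
      have := congrFun hrelu j
      simpa [relu, Finset.sum_apply, Pi.single_apply, hy,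
        Finset.sum_ite_eq' J j] using this
    have hposJ : ∀ j ∈ J, 0 < y j := by
      intro j hj
      have h := hval j
      rw [if_pos hj] at h
      by_contra hle
      push_neg at hle
      rw [max_eq_right hle] at h
      exact absurd h.symm (hβ j hj).ne'
    have hnonpos : ∀ j ∉ J, y j ≤ 0 := by
      intro j hj
      have h := hval j
      rw [if_neg hj] at h
      by_contra hlt
      push_neg at hlt
      rw [max_eq_left hlt.le] at h
      exact absurd h hlt.ne'
    refine ⟨Jᶜ.filter (fun i => y i < 0), Finset.filter_subset _ _,
      fun i => |y i|, ?_, ?_⟩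
    · intro i hi
      rcases Finset.mem_union.mp hi with h | h
      · exact abs_pos.mpr (hposJ i h).ne'
      · exact abs_pos.mpr (Finset.mem_filter.mp h).2.ne
    · apply hinj
      have hb : ∀ u v : Fin d → ℝ, u + b = v + b → u = v := by
        intro u v h; simpa using congrArg (fun w => w - b) h
      apply hb
      funext j
      rw [key]
      show y j = _
      by_cases hj : j ∈ J
      · rw [if_pos hj, if_neg (by simp [Finset.mem_filter, hj]),
          abs_of_pos (hposJ j hj)]
        ring
      · rw [if_neg hj]
        by_cases hk : y j < 0
        · rw [if_pos (Finset.mem_filter.mpr ⟨Finset.mem_compl.mpr hj, hk⟩),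
            abs_of_neg hk]
          ring
        · rw [if_neg (by simp [Finset.mem_filter, hk])]
          have : y j = 0 := le_antisymm (hnonpos j hj) (not_lt.mp hk)
          rw [this]; ring
  · rintro ⟨K, hK, α, hα, hx⟩
    have hyval : ∀ j, y j = (if j ∈ J then α j else 0) - (if j ∈ K then α j else 0) := by
      intro j; rw [hy, hx]; exact key K α j
    have hJK : ∀ j ∈ J, j ∉ K := by
      intro j hj hjk
      exact absurd hj (Finset.mem_compl.mp (hK hjk))
    have hposJ : ∀ j ∈ J, y j = α j := by
      intro j hj
      rw [hyval j, if_pos hj, if_neg (hJK j hj)]; ring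
    refine ⟨y, ?_, ?_⟩
    · intro i hi
      rw [hposJ i hi]
      exact hα i (Finset.mem_union_left _ hi)
    · funext j
      simp only [relu, Finset.sum_apply, Pi.smul_apply, Pi.single_apply, smul_eq_mul,
        mul_ite, mul_one, mul_zero, Finset.sum_ite_eq J j]
      show y j ⊔ 0 = _
      by_cases hj : j ∈ J
      · rw [if_pos hj]
        exact max_eq_left (hposJ j hj ▸ (hα j (Finset.mem_union_left _ hj)).le)
      · rw [if_neg hj]
        apply max_eq_right
        rw [hyval j, if_neg hj]
        by_cases hk : j ∈ K
        · rw [if_pos hk]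
          linarith [hα j (Finset.mem_union_right _ hk)]
        · rw [if_neg hk]; norm_num
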